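/- Suppose {w_x}_{x∈D} is a feasible solution to the state-conversion problem {(σ_x, τ_x, O_x)}_{x∈D} over workspace W. Define σ_x^± := (σ_x ⊕ (±τ_x))/√2 ∈ V₁ ⊕ V₂, define Ō_x on M ⊕ M by Ō_x(u ⊕ v) := (O_x† v) ⊕ (O_x u), and define w_x^± := (w_x ⊕ (±(O_x ⊗ I_W) w_x))/√2 ∈ (M ⊗ W) ⊕ (M ⊗ W), identifying (M ⊕ M) ⊗ W with (M ⊗ W) ⊕ (M ⊗ W). Then for all x, y ∈ D: (a) Ō_x is unitary with Ō_x² = I; (b) ⟨σ_x^+, σ_x^-⟩ = 0; (c) (Ō_x ⊗ I_W) w_x^± = ± w_x^±; (d) ‖w_x^+‖ = ‖w_x^-‖ = ‖w_x‖; and (e) ⟨w_x^+, w_y^-⟩ = ⟨σ_x^+, σ_y^-⟩. -/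

import Mathlib

open scoped InnerProductSpace

noncomputable section

variable {M : Type*} [NormedAddCommGroup M] [InnerProductSpace ℂ M]

/-- The operator `A ⊗ I_W` on `M ⊗ W`, where `W ≅ ℂ^m` and `M ⊗ ℂ^m` is modeled as the
Hilbert-space direct sum of `m` copies of `M` (the operator acts componentwise). -/
def tensorId (m : ℕ) (A : M →ₗ[ℂ] M) :
    PiLp 2 (fun _ : Fin m => M) →ₗ[ℂ] PiLp 2 (fun _ : Fin m => M) :=
  (WithLp.linearEquiv 2 ℂ (∀ _ : Fin m, M)).symm.toLinearMap ∘ₗ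
    (LinearMap.pi fun i => A ∘ₗ LinearMap.proj i) ∘ₗ
      (WithLp.linearEquiv 2 ℂ (∀ _ : Fin m, M)).toLinearMap

/-- The operator `u ⊕ v ↦ (A v) ⊕ (B u)` on the Hilbert-space direct sum `N ⊕ N`.
With `A = O†` and `B = O` this is the operator `Ō` of the statement. -/
def swapProdOp {N : Type*} [NormedAddCommGroup N] [InnerProductSpace ℂ N]
    (A B : N →ₗ[ℂ] N) : WithLp 2 (N × N) →ₗ[ℂ] WithLp 2 (N × N) :=
  (WithLp.linearEquiv 2 ℂ (N × N)).symm.toLinearMap ∘ₗ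
    ((A ∘ₗ LinearMap.snd ℂ N N).prod (B ∘ₗ LinearMap.fst ℂ N N)) ∘ₗ
      (WithLp.linearEquiv 2 ℂ (N × N)).toLinearMap

section Helpers

variable {M : Type*} [NormedAddCommGroup M] [InnerProductSpace ℂ M]

lemma tensorId_apply (m : ℕ) (A : M →ₗ[ℂ] M) (v : PiLp 2 (fun _ : Fin m => M)) (i : Fin m) :
    tensorId m A v i = A (v i) := rfl

lemma tensorId_comp_apply (m : ℕ) (A B : M →ₗ[ℂ] M) (v : PiLp 2 (fun _ : Fin m => M)) :
    tensorId m A (tensorId m B v) = tensorId m (A ∘ₗ B) v := rfl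

lemma tensorId_id_apply (m : ℕ) (v : PiLp 2 (fun _ : Fin m => M)) :
    tensorId m (LinearMap.id) v = v := rfl

lemma swapProdOp_apply {N : Type*} [NormedAddCommGroup N] [InnerProductSpace ℂ N]
    (A B : N →ₗ[ℂ] N) (u : WithLp 2 (N × N)) :
    swapProdOp A B u = (WithLp.equiv 2 (N × N)).symm (A u.ofLp.2, B u.ofLp.1) := rfl

lemma inner_tensorId_right [FiniteDimensional ℂ M] (m : ℕ) (A : M →ₗ[ℂ] M)
    (u v : PiLp 2 (fun _ : Fin m => M)) :
    ⟪u, tensorId m A v⟫_ℂ = ⟪tensorId m (LinearMap.adjoint A) u, v⟫_ℂ := by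
  simp [PiLp.inner_apply, tensorId_apply, LinearMap.adjoint_inner_left]

lemma csqrt2_mul : ((Real.sqrt 2 : ℂ))⁻¹ * ((Real.sqrt 2 : ℂ))⁻¹ = (2 : ℂ)⁻¹ := by
  rw [← mul_inv, ← Complex.ofReal_mul, Real.mul_self_sqrt (by norm_num)]
  norm_num

end Helpers

lemma inner_tensorId_left {M : Type*} [NormedAddCommGroup M] [InnerProductSpace ℂ M]
    [FiniteDimensional ℂ M] (m : ℕ) (A : M →ₗ[ℂ] M)
    (u v : PiLp 2 (fun _ : Fin m => M)) :
    ⟪tensorId m A u, v⟫_ℂ = ⟪u, tensorId m (LinearMap.adjoint A) v⟫_ℂ := by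
  simp [PiLp.inner_apply, tensorId_apply, LinearMap.adjoint_inner_right]

lemma tensorId_sub_apply {M : Type*} [NormedAddCommGroup M] [InnerProductSpace ℂ M]
    (m : ℕ) (A B : M →ₗ[ℂ] M) (v : PiLp 2 (fun _ : Fin m => M)) :
    tensorId m (A - B) v = tensorId m A v - tensorId m B v := rfl

lemma tensorId_zero_apply {M : Type*} [NormedAddCommGroup M] [InnerProductSpace ℂ M]
    (m : ℕ) (v : PiLp 2 (fun _ : Fin m => M)) :
    tensorId m (0 : M →ₗ[ℂ] M) v = 0 := by
  ext i; rfl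

/-- A feasible solution `{w_x}` to a state-conversion problem
`{(σ_x, τ_x, O_x)}` over workspace `W ≅ ℂ^m` gives rise, via
`σ_x^± := (σ_x ⊕ ±τ_x)/√2`, `Ō_x(u ⊕ v) := (O_x† v) ⊕ (O_x u)`, and
`w_x^± := (w_x ⊕ ±(O_x ⊗ I_W) w_x)/√2`, to a feasible solution of the associated
state-reflection problem: `Ō_x` is unitary with `Ō_x² = I`, `⟪σ_x⁺, σ_x⁻⟫ = 0`,
`(Ō_x ⊗ I_W) w_x^± = ± w_x^±`, `‖w_x^±‖ = ‖w_x‖`, and `⟪w_x⁺, w_y⁻⟫ = ⟪σ_x⁺, σ_y⁻⟫`. -/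
theorem state_conversion_to_state_reflection
    {D : Type*} [Fintype D]
    {V₁ : Type*} [NormedAddCommGroup V₁] [InnerProductSpace ℂ V₁] [FiniteDimensional ℂ V₁]
    {V₂ : Type*} [NormedAddCommGroup V₂] [InnerProductSpace ℂ V₂] [FiniteDimensional ℂ V₂]
    [FiniteDimensional ℂ M]
    (m : ℕ)
    (σ : D → V₁) (τ : D → V₂) (O : D → (M →ₗ[ℂ] M))
    (hOu : ∀ x, LinearMap.adjoint (O x) ∘ₗ O x = LinearMap.id)
    (hOu' : ∀ x, O x ∘ₗ LinearMap.adjoint (O x) = LinearMap.id)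
    (w : D → PiLp 2 (fun _ : Fin m => M))
    (hfeas : ∀ x y, ⟪σ x, σ y⟫_ℂ - ⟪τ x, τ y⟫_ℂ =
      ⟪w x, tensorId m ((LinearMap.id : M →ₗ[ℂ] M) - LinearMap.adjoint (O x) ∘ₗ O y) (w y)⟫_ℂ)
    (σp σm : D → WithLp 2 (V₁ × V₂))
    (hσp : ∀ x, σp x = ((Real.sqrt 2 : ℂ))⁻¹ • (WithLp.equiv 2 (V₁ × V₂)).symm (σ x, τ x))
    (hσm : ∀ x, σm x = ((Real.sqrt 2 : ℂ))⁻¹ • (WithLp.equiv 2 (V₁ × V₂)).symm (σ x, -τ x))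
    (wp wm : D → WithLp 2 (PiLp 2 (fun _ : Fin m => M) × PiLp 2 (fun _ : Fin m => M)))
    (hwp : ∀ x, wp x = ((Real.sqrt 2 : ℂ))⁻¹ •
      (WithLp.equiv 2 _).symm (w x, tensorId m (O x) (w x)))
    (hwm : ∀ x, wm x = ((Real.sqrt 2 : ℂ))⁻¹ •
      (WithLp.equiv 2 _).symm (w x, -(tensorId m (O x) (w x)))) :
    (∀ x (u v : WithLp 2 (M × M)),
        ⟪swapProdOp (LinearMap.adjoint (O x)) (O x) u,
          swapProdOp (LinearMap.adjoint (O x)) (O x) v⟫_ℂ = ⟪u, v⟫_ℂ) ∧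
    (∀ x (u : WithLp 2 (M × M)),
        swapProdOp (LinearMap.adjoint (O x)) (O x)
          (swapProdOp (LinearMap.adjoint (O x)) (O x) u) = u) ∧
    (∀ x, ⟪σp x, σm x⟫_ℂ = 0) ∧
    (∀ x, swapProdOp (tensorId m (LinearMap.adjoint (O x))) (tensorId m (O x)) (wp x) = wp x) ∧
    (∀ x, swapProdOp (tensorId m (LinearMap.adjoint (O x))) (tensorId m (O x)) (wm x) = -wm x) ∧
    (∀ x, ‖wp x‖ = ‖w x‖ ∧ ‖wm x‖ = ‖w x‖) ∧
    (∀ x y, ⟪wp x, wm y⟫_ℂ = ⟪σp x, σm y⟫_ℂ) := by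
  have cconj : (starRingEnd ℂ) ((Real.sqrt 2 : ℂ))⁻¹ = ((Real.sqrt 2 : ℂ))⁻¹ := by
    rw [map_inv₀, Complex.conj_ofReal]
  have hAapp : ∀ x (z : M), LinearMap.adjoint (O x) ((O x) z) = z := by
    intro x z
    have := LinearMap.ext_iff.mp (hOu x) z
    simpa using this
  have hAapp' : ∀ x (z : M), (O x) (LinearMap.adjoint (O x) z) = z := by
    intro x z
    have := LinearMap.ext_iff.mp (hOu' x) z
    simpa using this
  have hTT : ∀ x (v : PiLp 2 (fun _ : Fin m => M)),
      tensorId m (LinearMap.adjoint (O x)) (tensorId m (O x) v) = v := by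
    intro x v
    rw [tensorId_comp_apply, hOu x, tensorId_id_apply]
  have hzero : ∀ x, ⟪σ x, σ x⟫_ℂ = ⟪τ x, τ x⟫_ℂ := by
    intro x
    have h := hfeas x x
    rw [hOu x, sub_self, tensorId_zero_apply, inner_zero_right, sub_eq_zero] at h
    exact h
  refine ⟨?_, ?_, ?_, ?_, ?_, ?_, ?_⟩
  · intro x u v
    simp only [swapProdOp_apply, WithLp.prod_inner_apply, WithLp.equiv_symm_apply,
      WithLp.ofLp_toLp]
    have h1 : ⟪LinearMap.adjoint (O x) u.ofLp.2, LinearMap.adjoint (O x) v.ofLp.2⟫_ℂ = ⟪u.ofLp.2, v.ofLp.2⟫_ℂ := by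
      rw [LinearMap.adjoint_inner_left, hAapp' x]
    have h2 : ⟪(O x) u.ofLp.1, (O x) v.ofLp.1⟫_ℂ = ⟪u.ofLp.1, v.ofLp.1⟫_ℂ := by
      rw [← LinearMap.adjoint_inner_left, hAapp x]
    rw [h1, h2]; ring
  · intro x u
    apply (WithLp.equiv 2 (M × M)).injective
    refine Prod.ext ?_ ?_
    · show LinearMap.adjoint (O x) ((O x) u.ofLp.1) = u.ofLp.1
      exact hAapp x u.ofLp.1
    · show (O x) (LinearMap.adjoint (O x) u.ofLp.2) = u.ofLp.2
      exact hAapp' x u.ofLp.2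
  · intro x
    rw [hσp, hσm]
    simp only [inner_smul_left, inner_smul_right, WithLp.prod_inner_apply,
      WithLp.equiv_symm_apply, WithLp.ofLp_toLp, inner_neg_right, cconj]
    rw [hzero x]; ring
  · intro x
    rw [hwp]
    rw [map_smul]
    congr 1
    apply (WithLp.equiv 2 _).injective
    refine Prod.ext ?_ ?_
    · show tensorId m (LinearMap.adjoint (O x)) (tensorId m (O x) (w x)) = w x
      exact hTT x (w x)
    · rfl
  · intro x
    rw [hwm]
    rw [map_smul, ← smul_neg]
    congr 1
    apply (WithLp.equiv 2 _).injective
    refine Prod.ext ?_ ?_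
    · show tensorId m (LinearMap.adjoint (O x)) (-(tensorId m (O x) (w x))) = -(w x)
      rw [map_neg, hTT x]
    · show tensorId m (O x) (w x) = -(-(tensorId m (O x) (w x)))
      rw [neg_neg]
  · intro x
    have hTnorm : ⟪tensorId m (O x) (w x), tensorId m (O x) (w x)⟫_ℂ = ⟪w x, w x⟫_ℂ := by
      rw [inner_tensorId_left, hTT x]
    have key : ∀ v : WithLp 2 (PiLp 2 (fun _ : Fin m => M) × PiLp 2 (fun _ : Fin m => M)),
        ⟪v, v⟫_ℂ = ⟪w x, w x⟫_ℂ → ‖v‖ = ‖w x‖ := by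
      intro v hv
      have h1 : (‖v‖ : ℝ) ^ 2 = (‖w x‖ : ℝ) ^ 2 := by
        rw [inner_self_eq_norm_sq_to_K, inner_self_eq_norm_sq_to_K] at hv
        exact_mod_cast hv
      calc ‖v‖ = Real.sqrt (‖v‖ ^ 2) := by rw [Real.sqrt_sq (norm_nonneg _)]
        _ = Real.sqrt (‖w x‖ ^ 2) := by rw [h1]
        _ = ‖w x‖ := Real.sqrt_sq (norm_nonneg _)
    constructor
    · apply key
      rw [hwp]
      simp only [inner_smul_left, inner_smul_right, WithLp.prod_inner_apply,
        WithLp.equiv_symm_apply, WithLp.ofLp_toLp, cconj, hTnorm]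
      rw [← mul_assoc, csqrt2_mul]; ring
    · apply key
      rw [hwm]
      simp only [inner_smul_left, inner_smul_right, WithLp.prod_inner_apply,
        WithLp.equiv_symm_apply, WithLp.ofLp_toLp, cconj, inner_neg_neg, hTnorm]
      rw [← mul_assoc, csqrt2_mul]; ring
  · intro x y
    have hcross : ⟪tensorId m (O x) (w x), tensorId m (O y) (w y)⟫_ℂ =
        ⟪w x, tensorId m (LinearMap.adjoint (O x) ∘ₗ O y) (w y)⟫_ℂ := by
      rw [inner_tensorId_left, tensorId_comp_apply]
    have hf := hfeas x y
    rw [tensorId_sub_apply, inner_sub_right, tensorId_id_apply] at hf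
    rw [hwp, hwm, hσp, hσm]
    simp only [inner_smul_left, inner_smul_right, WithLp.prod_inner_apply,
      WithLp.equiv_symm_apply, WithLp.ofLp_toLp, inner_neg_right, cconj, hcross]
    linear_combination (-((Real.sqrt 2 : ℂ))⁻¹ * ((Real.sqrt 2 : ℂ))⁻¹) * hf

end
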